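/- arXiv:2512.14886 — 2 statements merged into one kernel-verified Lean document; each statement's English description precedes it below -/
import Mathlib

section
/- Let Ĝ be a chordal signed separable bigraph and suppose a vertex set S minimally separates non-trivial components Ĥ_1 and Ĥ_2 of Ĝ − S. Then Ĥ_1 or Ĥ_2 contains an edge that is a signed simplicial edge of Ĝ. -/
universe u

/-! ## Basic unsigned notions for bipartite graphs -/

/-- `G` has an induced cycle of length at least 6 (signs, if any, are arbitrary). -/
def HasLongInducedCycle {V : Type u} (G : SimpleGraph V) : Prop :=
  ∃ n : ℕ, 6 ≤ n ∧ ∃ f : ZMod n → V, Function.Injective f ∧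
    ∀ i j : ZMod n, G.Adj (f i) (f j) ↔ (j = i + 1 ∨ i = j + 1)

/-- A graph is separable if it contains an induced `2K₂`. -/
def IsSeparableGraph {V : Type u} (G : SimpleGraph V) : Prop :=
  ∃ a b c d : V, [a, b, c, d].Pairwise (· ≠ ·) ∧
    G.Adj a b ∧ G.Adj c d ∧ ¬ G.Adj a c ∧ ¬ G.Adj a d ∧ ¬ G.Adj b c ∧ ¬ G.Adj b d

/-- An edge `ab` of a bipartite graph is simplicial if every vertex of `N(a) - {b}`
is adjacent to every vertex of `N(b) - {a}`. -/
def SimplicialEdge {V : Type u} (G : SimpleGraph V) (a b : V) : Prop :=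
  G.Adj a b ∧ ∀ c ∈ G.neighborSet a \ {b}, ∀ d ∈ G.neighborSet b \ {a}, G.Adj c d

/-- A canonical ordering of a bigraph with bipartition given by `side`
(`X` is the `side = true` part, `Y` the `side = false` part): the neighbourhoods of
the `x`'s are decreasing and those of the `y`'s are increasing. -/
def IsCanonicalOrdering {V : Type u} (G : SimpleGraph V) (side : V → Bool)
    {α β : ℕ} (x : Fin α → V) (y : Fin β → V) : Prop :=
  Function.Injective x ∧ Function.Injective y ∧
  (∀ w : V, side w = true ↔ w ∈ Set.range x) ∧
  (∀ w : V, side w = false ↔ w ∈ Set.range y) ∧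
  (∀ i j : Fin α, i ≤ j → G.neighborSet (x j) ⊆ G.neighborSet (x i)) ∧
  (∀ i j : Fin β, i ≤ j → G.neighborSet (y i) ⊆ G.neighborSet (y j))

/-- `H` is a non-trivial (i.e. containing at least one edge) connected component
of `G - S`. -/
def IsNontrivialComponentOf {V : Type u} (G : SimpleGraph V) (S H : Set V) : Prop :=
  H ⊆ Sᶜ ∧ (G.induce H).Connected ∧
  (∀ a ∈ H, ∀ b ∈ Sᶜ, G.Adj a b → b ∈ H) ∧
  (∃ a ∈ H, ∃ b ∈ H, G.Adj a b)

/-- `S` minimally separates the non-trivial components `H` and `H'` of `G - S`: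
every vertex of `S` has a neighbour in `H` and a neighbour in `H'`. -/
def MinimallySeparates {V : Type u} (G : SimpleGraph V) (S H H' : Set V) : Prop :=
  IsNontrivialComponentOf G S H ∧ IsNontrivialComponentOf G S H' ∧ H ≠ H' ∧
  ∀ s ∈ S, (∃ a ∈ H, G.Adj s a) ∧ (∃ a ∈ H', G.Adj s a)

/-! ## Signed bigraphs -/

/-- A signed bigraph: a bipartite graph (with bipartition recorded by `side`)
whose edges carry a sign (`true` = positive, `false` = negative). -/
structure SignedBigraph (V : Type u) where
  graph : SimpleGraph V
  sign : V → V → Bool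
  sign_symm : ∀ a b : V, sign a b = sign b a
  side : V → Bool
  bipartite : ∀ ⦃a b : V⦄, graph.Adj a b → side a ≠ side b

namespace SignedBigraph

variable {V : Type u}

def Adj (G : SignedBigraph V) (a b : V) : Prop := G.graph.Adj a b

/-- `N(ab) = (N(a) ∪ N(b)) - {a, b}`. -/
def edgeNbhd (G : SignedBigraph V) (a b : V) : Set V :=
  (G.graph.neighborSet a ∪ G.graph.neighborSet b) \ {a, b}

/-- The edge `ab` is signed simplicial: `N(ab)` induces a positive biclique. -/
def SignedSimplicial (G : SignedBigraph V) (a b : V) : Prop :=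
  G.Adj a b ∧
    ∀ c ∈ G.edgeNbhd a b, ∀ d ∈ G.edgeNbhd a b,
      G.side c ≠ G.side d → (G.Adj c d ∧ G.sign c d = true)

/-- Delete a set of edges from a signed bigraph (keeping all vertices). -/
def deleteEdges (G : SignedBigraph V) (s : Set (Sym2 V)) : SignedBigraph V where
  graph := G.graph.deleteEdges s
  sign := G.sign
  sign_symm := G.sign_symm
  side := G.side
  bipartite := by
    intro a b h
    exact G.bipartite (SimpleGraph.deleteEdges_adj.mp h).1

/-- The induced signed subgraph on a set of vertices. -/
def induce (G : SignedBigraph V) (A : Set V) : SignedBigraph A where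
  graph := G.graph.induce A
  sign a b := G.sign a b
  sign_symm a b := G.sign_symm a b
  side a := G.side a
  bipartite := by
    intro a b h
    exact G.bipartite h

/-- A chordal signed bigraph: the edges can be ordered `e₁, …, e_m` so that each `eᵢ`
is a signed simplicial edge of the signed bigraph obtained by deleting `e₁, …, e_{i-1}`. -/
def IsChordal (G : SignedBigraph V) : Prop :=
  ∃ l : List (Sym2 V), l.Nodup ∧ (∀ e, e ∈ G.graph.edgeSet ↔ e ∈ l) ∧
    ∀ (i : ℕ) (h : i < l.length), ∃ a b : V,
      l.get ⟨i, h⟩ = s(a, b) ∧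
      (G.deleteEdges {e | e ∈ l.take i}).SignedSimplicial a b

/-! ## Forbidden patterns F₁ – F₆, D, long cycles -/

/-- `G` contains the all-negative 4-cycle `F₁` as an induced subgraph. -/
def HasF1 (G : SignedBigraph V) : Prop :=
  ∃ u1 u2 v1 v2 : V,
    [u1, u2, v1, v2].Pairwise (· ≠ ·) ∧
    G.Adj u1 v1 ∧ G.Adj u1 v2 ∧ G.Adj u2 v1 ∧ G.Adj u2 v2 ∧
    ¬ G.Adj u1 u2 ∧ ¬ G.Adj v1 v2 ∧
    G.sign u1 v1 = false ∧ G.sign u1 v2 = false ∧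
    G.sign u2 v1 = false ∧ G.sign u2 v2 = false

/-- `G` contains a member of `F₂` (a signed `K_{2,3}`) as an induced subgraph. -/
def HasF2 (G : SignedBigraph V) : Prop :=
  ∃ u1 u2 v1 v2 v3 : V,
    [u1, u2, v1, v2, v3].Pairwise (· ≠ ·) ∧
    G.Adj u1 v1 ∧ G.Adj u1 v2 ∧ G.Adj u1 v3 ∧
    G.Adj u2 v1 ∧ G.Adj u2 v2 ∧ G.Adj u2 v3 ∧
    ¬ G.Adj u1 u2 ∧ ¬ G.Adj v1 v2 ∧ ¬ G.Adj v1 v3 ∧ ¬ G.Adj v2 v3 ∧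
    G.sign u1 v1 = false ∧ G.sign u1 v2 = false ∧
    G.sign u2 v2 = false ∧ G.sign u2 v3 = false

/-- `G` contains a member of `F₃` (a signed `K_{2,4}`) as an induced subgraph. -/
def HasF3 (G : SignedBigraph V) : Prop :=
  ∃ u1 u2 v1 v2 v3 v4 : V,
    [u1, u2, v1, v2, v3, v4].Pairwise (· ≠ ·) ∧
    G.Adj u1 v1 ∧ G.Adj u1 v2 ∧ G.Adj u1 v3 ∧ G.Adj u1 v4 ∧
    G.Adj u2 v1 ∧ G.Adj u2 v2 ∧ G.Adj u2 v3 ∧ G.Adj u2 v4 ∧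
    ¬ G.Adj u1 u2 ∧ ¬ G.Adj v1 v2 ∧ ¬ G.Adj v1 v3 ∧ ¬ G.Adj v1 v4 ∧
    ¬ G.Adj v2 v3 ∧ ¬ G.Adj v2 v4 ∧ ¬ G.Adj v3 v4 ∧
    G.sign u1 v1 = false ∧ G.sign u1 v2 = false ∧
    G.sign u2 v3 = false ∧ G.sign u2 v4 = false

/-- `G` contains a member of `F₄` (a signed `K_{3,3}` with negative perfect matching)
as an induced subgraph. -/
def HasF4 (G : SignedBigraph V) : Prop :=
  ∃ u1 u2 u3 v1 v2 v3 : V,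
    [u1, u2, u3, v1, v2, v3].Pairwise (· ≠ ·) ∧
    G.Adj u1 v1 ∧ G.Adj u1 v2 ∧ G.Adj u1 v3 ∧
    G.Adj u2 v1 ∧ G.Adj u2 v2 ∧ G.Adj u2 v3 ∧
    G.Adj u3 v1 ∧ G.Adj u3 v2 ∧ G.Adj u3 v3 ∧
    ¬ G.Adj u1 u2 ∧ ¬ G.Adj u1 u3 ∧ ¬ G.Adj u2 u3 ∧
    ¬ G.Adj v1 v2 ∧ ¬ G.Adj v1 v3 ∧ ¬ G.Adj v2 v3 ∧
    G.sign u1 v1 = false ∧ G.sign u2 v2 = false ∧ G.sign u3 v3 = false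

/-- `G` contains a member of `F₅` as an induced subgraph. -/
def HasF5 (G : SignedBigraph V) : Prop :=
  ∃ x1 x2 x3 y1 y2 y3 : V,
    [x1, x2, x3, y1, y2, y3].Pairwise (· ≠ ·) ∧
    G.Adj x1 y1 ∧ G.Adj x1 y2 ∧ ¬ G.Adj x1 y3 ∧
    G.Adj x2 y1 ∧ G.Adj x2 y2 ∧ G.Adj x2 y3 ∧
    G.Adj x3 y1 ∧ G.Adj x3 y2 ∧ G.Adj x3 y3 ∧
    ¬ G.Adj x1 x2 ∧ ¬ G.Adj x1 x3 ∧ ¬ G.Adj x2 x3 ∧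
    ¬ G.Adj y1 y2 ∧ ¬ G.Adj y1 y3 ∧ ¬ G.Adj y2 y3 ∧
    G.sign x2 y1 = false ∧ G.sign x3 y2 = false

/-- `G` contains a member of `F₆` as an induced subgraph. -/
def HasF6 (G : SignedBigraph V) : Prop :=
  ∃ x1 x2 x3 x4 y1 y2 y3 y4 : V,
    [x1, x2, x3, x4, y1, y2, y3, y4].Pairwise (· ≠ ·) ∧
    G.Adj x1 y1 ∧ G.Adj x1 y2 ∧ ¬ G.Adj x1 y3 ∧ ¬ G.Adj x1 y4 ∧
    G.Adj x2 y1 ∧ G.Adj x2 y2 ∧ ¬ G.Adj x2 y3 ∧ ¬ G.Adj x2 y4 ∧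
    G.Adj x3 y1 ∧ G.Adj x3 y2 ∧ G.Adj x3 y3 ∧ G.Adj x3 y4 ∧
    G.Adj x4 y1 ∧ G.Adj x4 y2 ∧ G.Adj x4 y3 ∧ G.Adj x4 y4 ∧
    ¬ G.Adj x1 x2 ∧ ¬ G.Adj x1 x3 ∧ ¬ G.Adj x1 x4 ∧
    ¬ G.Adj x2 x3 ∧ ¬ G.Adj x2 x4 ∧ ¬ G.Adj x3 x4 ∧
    ¬ G.Adj y1 y2 ∧ ¬ G.Adj y1 y3 ∧ ¬ G.Adj y1 y4 ∧
    ¬ G.Adj y2 y3 ∧ ¬ G.Adj y2 y4 ∧ ¬ G.Adj y3 y4 ∧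
    G.sign x1 y1 = false ∧ G.sign x2 y1 = false ∧ G.sign x3 y2 = false ∧
    G.sign x4 y3 = false ∧ G.sign x4 y4 = false

/-- `G` contains a member of `D` (a 6-cycle `x₁y₁x₂y₃x₃y₂x₁` plus a negative chord
`x₂y₂`) as an induced subgraph. -/
def HasD (G : SignedBigraph V) : Prop :=
  ∃ x1 x2 x3 y1 y2 y3 : V,
    [x1, x2, x3, y1, y2, y3].Pairwise (· ≠ ·) ∧
    G.Adj x1 y1 ∧ G.Adj y1 x2 ∧ G.Adj x2 y3 ∧ G.Adj y3 x3 ∧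
    G.Adj x3 y2 ∧ G.Adj y2 x1 ∧
    G.Adj x2 y2 ∧ G.sign x2 y2 = false ∧
    ¬ G.Adj x1 y3 ∧ ¬ G.Adj x3 y1 ∧
    ¬ G.Adj x1 x2 ∧ ¬ G.Adj x1 x3 ∧ ¬ G.Adj x2 x3 ∧
    ¬ G.Adj y1 y2 ∧ ¬ G.Adj y1 y3 ∧ ¬ G.Adj y2 y3

/-- `G` contains an induced signed cycle of length at least 6. -/
def HasLongCycle (G : SignedBigraph V) : Prop :=
  HasLongInducedCycle G.graph

/-! ## Minimal forbidden patterns M₁ – M₅ for complete bigraphs -/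

def HasM1 (G : SignedBigraph V) : Prop := G.HasF1

def HasM2 (G : SignedBigraph V) : Prop :=
  ∃ u1 u2 v1 v2 v3 : V,
    [u1, u2, v1, v2, v3].Pairwise (· ≠ ·) ∧
    G.Adj u1 v1 ∧ G.Adj u1 v2 ∧ G.Adj u1 v3 ∧
    G.Adj u2 v1 ∧ G.Adj u2 v2 ∧ G.Adj u2 v3 ∧
    ¬ G.Adj u1 u2 ∧ ¬ G.Adj v1 v2 ∧ ¬ G.Adj v1 v3 ∧ ¬ G.Adj v2 v3 ∧
    G.sign u1 v1 = false ∧ G.sign u1 v2 = false ∧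
    G.sign u2 v2 = false ∧ G.sign u2 v3 = false ∧
    G.sign u1 v3 = true ∧ G.sign u2 v1 = true

def HasM3 (G : SignedBigraph V) : Prop :=
  ∃ u1 u2 v1 v2 v3 v4 : V,
    [u1, u2, v1, v2, v3, v4].Pairwise (· ≠ ·) ∧
    G.Adj u1 v1 ∧ G.Adj u1 v2 ∧ G.Adj u1 v3 ∧ G.Adj u1 v4 ∧
    G.Adj u2 v1 ∧ G.Adj u2 v2 ∧ G.Adj u2 v3 ∧ G.Adj u2 v4 ∧
    ¬ G.Adj u1 u2 ∧ ¬ G.Adj v1 v2 ∧ ¬ G.Adj v1 v3 ∧ ¬ G.Adj v1 v4 ∧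
    ¬ G.Adj v2 v3 ∧ ¬ G.Adj v2 v4 ∧ ¬ G.Adj v3 v4 ∧
    G.sign u1 v1 = false ∧ G.sign u1 v2 = false ∧
    G.sign u2 v3 = false ∧ G.sign u2 v4 = false ∧
    G.sign u1 v3 = true ∧ G.sign u1 v4 = true ∧
    G.sign u2 v1 = true ∧ G.sign u2 v2 = true

def HasM4 (G : SignedBigraph V) : Prop :=
  ∃ u1 u2 u3 v1 v2 v3 : V,
    [u1, u2, u3, v1, v2, v3].Pairwise (· ≠ ·) ∧
    G.Adj u1 v1 ∧ G.Adj u1 v2 ∧ G.Adj u1 v3 ∧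
    G.Adj u2 v1 ∧ G.Adj u2 v2 ∧ G.Adj u2 v3 ∧
    G.Adj u3 v1 ∧ G.Adj u3 v2 ∧ G.Adj u3 v3 ∧
    ¬ G.Adj u1 u2 ∧ ¬ G.Adj u1 u3 ∧ ¬ G.Adj u2 u3 ∧
    ¬ G.Adj v1 v2 ∧ ¬ G.Adj v1 v3 ∧ ¬ G.Adj v2 v3 ∧
    G.sign u1 v1 = false ∧ G.sign u2 v2 = false ∧ G.sign u3 v3 = false ∧
    G.sign u1 v2 = true ∧ G.sign u1 v3 = true ∧ G.sign u2 v1 = true ∧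
    G.sign u2 v3 = true ∧ G.sign u3 v1 = true ∧ G.sign u3 v2 = true

def HasM5 (G : SignedBigraph V) : Prop :=
  ∃ x1 x2 x3 y1 y2 y3 : V,
    [x1, x2, x3, y1, y2, y3].Pairwise (· ≠ ·) ∧
    G.Adj x1 y1 ∧ G.Adj x1 y2 ∧ G.Adj x1 y3 ∧
    G.Adj x2 y1 ∧ G.Adj x2 y2 ∧ G.Adj x2 y3 ∧
    G.Adj x3 y1 ∧ G.Adj x3 y2 ∧ G.Adj x3 y3 ∧
    ¬ G.Adj x1 x2 ∧ ¬ G.Adj x1 x3 ∧ ¬ G.Adj x2 x3 ∧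
    ¬ G.Adj y1 y2 ∧ ¬ G.Adj y1 y3 ∧ ¬ G.Adj y2 y3 ∧
    G.sign x1 y1 = false ∧ G.sign x1 y2 = false ∧
    G.sign x2 y2 = false ∧ G.sign x3 y3 = false ∧
    G.sign x1 y3 = true ∧ G.sign x2 y1 = true ∧ G.sign x2 y3 = true ∧
    G.sign x3 y1 = true ∧ G.sign x3 y2 = true

/-! ## The patterns W₁ – W₆ (relativized to an ambient vertex set `A`, with the
distinguished vertices being exactly the vertices in `S`). -/

def HasW1In (G : SignedBigraph V) (A S : Set V) : Prop :=
  ∃ u y x z : V, u ∈ A ∧ y ∈ A ∧ x ∈ A ∧ z ∈ A ∧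
    [u, y, x, z].Pairwise (· ≠ ·) ∧
    G.Adj u y ∧ G.Adj u z ∧ G.Adj x y ∧ G.Adj x z ∧
    ¬ G.Adj u x ∧ ¬ G.Adj y z ∧
    G.sign x y = false ∧ G.sign x z = false ∧
    x ∈ S ∧ u ∉ S ∧ y ∉ S ∧ z ∉ S

def HasW2In (G : SignedBigraph V) (A S : Set V) : Prop :=
  ∃ u y v z p : V, u ∈ A ∧ y ∈ A ∧ v ∈ A ∧ z ∈ A ∧ p ∈ A ∧
    [u, y, v, z, p].Pairwise (· ≠ ·) ∧
    G.Adj u y ∧ G.Adj u z ∧ G.Adj v y ∧ G.Adj v z ∧ G.Adj p v ∧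
    ¬ G.Adj u v ∧ ¬ G.Adj y z ∧ ¬ G.Adj p u ∧ ¬ G.Adj p y ∧ ¬ G.Adj p z ∧
    G.sign v y = false ∧ G.sign v z = false ∧
    p ∈ S ∧ u ∉ S ∧ y ∉ S ∧ v ∉ S ∧ z ∉ S

def HasW3In (G : SignedBigraph V) (A S : Set V) : Prop :=
  ∃ u y v z p : V, u ∈ A ∧ y ∈ A ∧ v ∈ A ∧ z ∈ A ∧ p ∈ A ∧
    [u, y, v, z, p].Pairwise (· ≠ ·) ∧
    G.Adj u y ∧ G.Adj u z ∧ G.Adj v y ∧ G.Adj v z ∧ G.Adj p v ∧ G.Adj p u ∧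
    ¬ G.Adj u v ∧ ¬ G.Adj y z ∧ ¬ G.Adj p y ∧ ¬ G.Adj p z ∧
    G.sign v y = false ∧ G.sign v z = false ∧ G.sign p u = false ∧
    p ∈ S ∧ u ∉ S ∧ y ∉ S ∧ v ∉ S ∧ z ∉ S

def HasW4In (G : SignedBigraph V) (A S : Set V) : Prop :=
  ∃ u y c z p q : V, u ∈ A ∧ y ∈ A ∧ c ∈ A ∧ z ∈ A ∧ p ∈ A ∧ q ∈ A ∧
    [u, y, c, z, p, q].Pairwise (· ≠ ·) ∧
    G.Adj u y ∧ G.Adj u z ∧ G.Adj c y ∧ G.Adj c z ∧ G.Adj p c ∧ G.Adj p u ∧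
    G.Adj q p ∧
    ¬ G.Adj u c ∧ ¬ G.Adj y z ∧ ¬ G.Adj p y ∧ ¬ G.Adj p z ∧
    ¬ G.Adj q u ∧ ¬ G.Adj q y ∧ ¬ G.Adj q c ∧ ¬ G.Adj q z ∧
    G.sign c y = false ∧ G.sign c z = false ∧ G.sign p u = false ∧
    q ∈ S ∧ u ∉ S ∧ y ∉ S ∧ c ∉ S ∧ z ∉ S ∧ p ∉ S

def HasW5In (G : SignedBigraph V) (A S : Set V) : Prop :=
  ∃ u y v z x : V, u ∈ A ∧ y ∈ A ∧ v ∈ A ∧ z ∈ A ∧ x ∈ A ∧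
    [u, y, v, z, x].Pairwise (· ≠ ·) ∧
    G.Adj u y ∧ G.Adj u z ∧ G.Adj v y ∧ G.Adj v z ∧ G.Adj x v ∧ G.Adj x u ∧
    ¬ G.Adj u v ∧ ¬ G.Adj y z ∧ ¬ G.Adj x y ∧ ¬ G.Adj x z ∧
    G.sign v y = false ∧ G.sign x u = false ∧
    x ∈ S ∧ y ∈ S ∧ u ∉ S ∧ v ∉ S ∧ z ∉ S

def HasW6In (G : SignedBigraph V) (A S : Set V) : Prop :=
  ∃ u y v z x : V, u ∈ A ∧ y ∈ A ∧ v ∈ A ∧ z ∈ A ∧ x ∈ A ∧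
    [u, y, v, z, x].Pairwise (· ≠ ·) ∧
    G.Adj u y ∧ G.Adj u z ∧ G.Adj v y ∧ G.Adj v z ∧ G.Adj x v ∧
    ¬ G.Adj u v ∧ ¬ G.Adj y z ∧ ¬ G.Adj x u ∧ ¬ G.Adj x y ∧ ¬ G.Adj x z ∧
    G.sign v y = false ∧
    x ∈ S ∧ y ∈ S ∧ u ∉ S ∧ v ∉ S ∧ z ∉ S

/-! ## Tadpoles, sums and joins -/

/-- The vertex set of a tadpole with heads `w, y, z` and path vertices `x`. -/
def tadVerts {n : ℕ} (w y z : V) (x : Fin n → V) : Set V :=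
  {w, y, z} ∪ Set.range x

/-- The data `(w, y, z, x)` forms an induced tadpole in `G`:
`w, y, z, x ⟨k⟩` induce a 4-cycle whose edges `x ⟨k⟩ y` and `x ⟨k⟩ z` are negative,
together with the induced path `x ⟨k⟩, x ⟨k-1⟩, …, x 0`; the vertex `x 0` is the end
and `w, y, z` are the heads.  If `t2 = true` the tadpole is of type 2: there is
additionally a negative edge from `w` to `x ⟨k-1⟩`.
(The paper's parameter `k ≥ 1` corresponds to `k + 1` here.) -/
structure IsInducedTadpole (G : SignedBigraph V) (k : ℕ) (t2 : Bool)
    (w y z : V) (x : Fin (k + 1) → V) : Prop where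
  t2_len : t2 = true → 1 ≤ k
  inj : Function.Injective x
  w_notmem : ∀ i, w ≠ x i
  y_notmem : ∀ i, y ≠ x i
  z_notmem : ∀ i, z ≠ x i
  wy : w ≠ y
  wz : w ≠ z
  yz : y ≠ z
  adj_wy : G.Adj w y
  adj_wz : G.Adj w z
  not_adj_yz : ¬ G.Adj y z
  adj_path : ∀ i j : Fin (k + 1), G.Adj (x i) (x j) ↔ (i.1 + 1 = j.1 ∨ j.1 + 1 = i.1)
  adj_y : ∀ i : Fin (k + 1), G.Adj y (x i) ↔ i.1 = k
  adj_z : ∀ i : Fin (k + 1), G.Adj z (x i) ↔ i.1 = k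
  adj_w : ∀ i : Fin (k + 1), G.Adj w (x i) ↔ (t2 = true ∧ i.1 + 1 = k)
  sign_y : ∀ i : Fin (k + 1), i.1 = k → G.sign (x i) y = false
  sign_z : ∀ i : Fin (k + 1), i.1 = k → G.sign (x i) z = false
  sign_w : ∀ i : Fin (k + 1), t2 = true → i.1 + 1 = k → G.sign w (x i) = false

/-- `G` contains a sum of two tadpoles (identified at their ends) as an induced
subgraph. -/
def HasTadpoleSum (G : SignedBigraph V) : Prop :=
  ∃ (k k' : ℕ) (t t' : Bool) (w y z w' y' z' : V)
    (x : Fin (k + 1) → V) (x' : Fin (k' + 1) → V),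
    G.IsInducedTadpole k t w y z x ∧ G.IsInducedTadpole k' t' w' y' z' x' ∧
    x 0 = x' 0 ∧
    tadVerts w y z x ∩ tadVerts w' y' z' x' = {x 0} ∧
    ∀ a ∈ tadVerts w y z x, ∀ b ∈ tadVerts w' y' z' x',
      a ≠ x 0 → b ≠ x' 0 → ¬ G.Adj a b

/-- `G` contains a join of two tadpoles as an induced subgraph: two disjoint induced
tadpoles such that the edges between them are exactly those joining the end of each
tadpole to all vertices of the other tadpole in the opposite partite set; all these
edges are positive, except that the edge from an end to the head `w` of the other
tadpole may be of either sign when that tadpole is a member of `W₁` (i.e. has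
`k = 0` and is of type 1), in which case the ends are required to be adjacent. -/
def HasTadpoleJoin (G : SignedBigraph V) : Prop :=
  ∃ (k k' : ℕ) (t t' : Bool) (w y z w' y' z' : V)
    (x : Fin (k + 1) → V) (x' : Fin (k' + 1) → V),
    G.IsInducedTadpole k t w y z x ∧ G.IsInducedTadpole k' t' w' y' z' x' ∧
    Disjoint (tadVerts w y z x) (tadVerts w' y' z' x') ∧
    (∀ a ∈ tadVerts w y z x, ∀ b ∈ tadVerts w' y' z' x',
      (G.Adj a b ↔ ((a = x 0 ∨ b = x' 0) ∧ G.side a ≠ G.side b))) ∧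
    ((k = 0 ∧ t = false) ∨ (k' = 0 ∧ t' = false) → G.side (x 0) ≠ G.side (x' 0)) ∧
    (∀ a ∈ tadVerts w y z x, ∀ b ∈ tadVerts w' y' z' x', G.Adj a b →
      ¬ (a = x 0 ∧ b = w' ∧ k' = 0 ∧ t' = false) →
      ¬ (a = w ∧ b = x' 0 ∧ k = 0 ∧ t = false) →
      G.sign a b = true)

/-- `G` contains a member of
`ℱ = F₁ ∪ F₂ ∪ F₃ ∪ F₄ ∪ F₅ ∪ F₆ ∪ 𝒞 ∪ D ∪ 𝒮 ∪ 𝒥` as an induced subgraph. -/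
def HasForbidden (G : SignedBigraph V) : Prop :=
  G.HasF1 ∨ G.HasF2 ∨ G.HasF3 ∨ G.HasF4 ∨ G.HasF5 ∨ G.HasF6 ∨
  G.HasLongCycle ∨ G.HasD ∨ G.HasTadpoleSum ∨ G.HasTadpoleJoin

/-- `G` is `ℱ`-free. -/
def FFree (G : SignedBigraph V) : Prop := ¬ G.HasForbidden

end SignedBigraph

/-! ## Concrete complete signed bipartite graphs (for the graphs M₁ – M₅) -/

/-- The complete bipartite graph on `Fin a ⊕ Fin b`. -/
def cbsGraph (a b : ℕ) : SimpleGraph (Fin a ⊕ Fin b) where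
  Adj u v := u.isLeft ≠ v.isLeft
  symm := ⟨fun _ _ h => Ne.symm h⟩
  loopless := ⟨fun _ h => h rfl⟩

def cbsSign {a b : ℕ} (sgn : Fin a → Fin b → Bool) :
    Fin a ⊕ Fin b → Fin a ⊕ Fin b → Bool
  | Sum.inl i, Sum.inr j => sgn i j
  | Sum.inr j, Sum.inl i => sgn i j
  | _, _ => true

/-- The complete signed bipartite graph with parts `Fin a`, `Fin b`, and signs given
by `sgn`. -/
def completeSignedBigraph (a b : ℕ) (sgn : Fin a → Fin b → Bool) :
    SignedBigraph (Fin a ⊕ Fin b) where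
  graph := cbsGraph a b
  sign := cbsSign sgn
  sign_symm := by
    intro u v
    cases u <;> cases v <;> rfl
  side := Sum.isLeft
  bipartite := fun _ _ h => h

/-- `M₁`: the all-negative 4-cycle. -/
def Mgraph1 : SignedBigraph (Fin 2 ⊕ Fin 2) :=
  completeSignedBigraph 2 2 (fun _ _ => false)

/-- `M₂`. -/
def Mgraph2 : SignedBigraph (Fin 2 ⊕ Fin 3) :=
  completeSignedBigraph 2 3
    (fun i j => ! decide ((i = 0 ∧ (j = 0 ∨ j = 1)) ∨ (i = 1 ∧ (j = 1 ∨ j = 2))))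

/-- `M₃`. -/
def Mgraph3 : SignedBigraph (Fin 2 ⊕ Fin 4) :=
  completeSignedBigraph 2 4
    (fun i j => ! decide ((i = 0 ∧ (j = 0 ∨ j = 1)) ∨ (i = 1 ∧ (j = 2 ∨ j = 3))))

/-- `M₄`. -/
def Mgraph4 : SignedBigraph (Fin 3 ⊕ Fin 3) :=
  completeSignedBigraph 3 3 (fun i j => ! decide ((i : ℕ) = (j : ℕ)))

/-- `M₅`. -/
def Mgraph5 : SignedBigraph (Fin 3 ⊕ Fin 3) :=
  completeSignedBigraph 3 3
    (fun i j => ! decide ((i = 0 ∧ (j = 0 ∨ j = 1)) ∨ (i = 1 ∧ j = 1) ∨ (i = 2 ∧ j = 2)))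


section AuxLemmas

variable {V : Type u}

private lemma ntc_walk_mem {G : SimpleGraph V} {S H H' : Set V}
    (hH : IsNontrivialComponentOf G S H) (hH' : IsNontrivialComponentOf G S H') :
    ∀ {x y : ↑H}, (G.induce H).Walk x y → (x : V) ∈ H' → (y : V) ∈ H' := by
  intro x y p
  induction p with
  | nil => exact id
  | @cons u v w h p ih =>
      intro hu
      exact ih (hH'.2.2.1 ↑u hu ↑v (hH.1 v.2) h)

private lemma ntc_eq {G : SimpleGraph V} {S H H' : Set V}
    (hH : IsNontrivialComponentOf G S H) (hH' : IsNontrivialComponentOf G S H')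
    {v : V} (hv : v ∈ H) (hv' : v ∈ H') : H = H' := by
  apply Set.Subset.antisymm
  · intro u hu
    obtain ⟨p⟩ := hH.2.1.preconnected ⟨v, hv⟩ ⟨u, hu⟩
    exact ntc_walk_mem hH hH' p hv'
  · intro u hu
    obtain ⟨p⟩ := hH'.2.1.preconnected ⟨v, hv'⟩ ⟨u, hu⟩
    exact ntc_walk_mem hH' hH p hv

private lemma walk_first_step {G : SimpleGraph V} {H : Set V} :
    ∀ {x y : ↑H}, (G.induce H).Walk x y → x ≠ y → ∃ c ∈ H, G.Adj ↑x c := by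
  intro x y p hxy
  cases p with
  | nil => exact absurd rfl hxy
  | @cons u v w h p => exact ⟨↑v, v.2, h⟩

private lemma ntc_exists_nbr {G : SimpleGraph V} {S H : Set V}
    (hH : IsNontrivialComponentOf G S H) {a : V} (ha : a ∈ H) :
    ∃ c ∈ H, G.Adj a c := by
  obtain ⟨p, hp, q, hq, hpq⟩ := hH.2.2.2
  by_cases hap : a = p
  · exact ⟨q, hq, hap ▸ hpq⟩
  · obtain ⟨w⟩ := hH.2.1.preconnected ⟨a, ha⟩ ⟨p, hp⟩
    exact walk_first_step w (fun h => hap (congrArg Subtype.val h))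

private lemma ss_symm {G : SignedBigraph V} {a b : V} (h : G.SignedSimplicial a b) :
    G.SignedSimplicial b a := by
  obtain ⟨hadj, hcl⟩ := h
  refine ⟨G.graph.adj_symm hadj, ?_⟩
  have he : G.edgeNbhd b a = G.edgeNbhd a b := by
    unfold SignedBigraph.edgeNbhd
    rw [Set.union_comm, Set.pair_comm]
  rw [he]
  exact hcl

private lemma ms_symm {G : SimpleGraph V} {S H1 H2 : Set V}
    (h : MinimallySeparates G S H1 H2) : MinimallySeparates G S H2 H1 :=
  ⟨h.2.1, h.1, (h.2.2.1).symm, fun s hs => ⟨(h.2.2.2 s hs).2, (h.2.2.2 s hs).1⟩⟩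

private lemma core_lemma (G : SignedBigraph V) (s : Set (Sym2 V)) (S H1 H2 : Set V)
    (hmin : MinimallySeparates G.graph S H1 H2)
    (hnt : ∀ e ∈ s, ∀ v, v ∈ e → v ∉ H1 ∪ H2)
    (a b : V) (ha : a ∈ H1) (hG : G.Adj a b)
    (hs : (G.deleteEdges s).SignedSimplicial a b) :
    b ∈ H1 ∧ G.SignedSimplicial a b := by
  obtain ⟨h1, h2, hne, hScond⟩ := hmin
  have hpres : ∀ u w : V, u ∈ H1 ∪ H2 → G.Adj u w → (G.deleteEdges s).Adj u w := by
    intro u w hu h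
    have : s(u, w) ∉ s := fun hmem => hnt _ hmem u (Sym2.mem_mk_left u w) hu
    exact SimpleGraph.deleteEdges_adj.mpr ⟨h, this⟩
  by_cases hbS : b ∈ S
  · exfalso
    obtain ⟨h2v, hh2v, hadjb2⟩ := (hScond b hbS).2
    obtain ⟨c, hcH, hac⟩ := ntc_exists_nbr h1 ha
    have hdisj : ∀ x, x ∈ H1 → x ∈ H2 → False := fun x hx hx' => hne (ntc_eq h1 h2 hx hx')
    have hc' : c ∈ (G.deleteEdges s).edgeNbhd a b := by
      refine ⟨Or.inl (hpres a c (Or.inl ha) hac), ?_⟩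
      intro hmem
      rcases Set.mem_insert_iff.mp hmem with heq | heq
      · subst heq; exact G.graph.loopless.irrefl c hac
      · rw [Set.mem_singleton_iff] at heq
        subst heq
        exact (h1.1 hcH) hbS
    have hd' : h2v ∈ (G.deleteEdges s).edgeNbhd a b := by
      refine ⟨Or.inr ((G.deleteEdges s).graph.adj_symm
        (hpres h2v b (Or.inr hh2v) (G.graph.adj_symm hadjb2))), ?_⟩
      intro hmem
      rcases Set.mem_insert_iff.mp hmem with heq | heq
      · subst heq; exact hdisj h2v ha hh2v
      · rw [Set.mem_singleton_iff] at heq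
        subst heq
        exact (h2.1 hh2v) hbS
    have tool : ∀ w x y z : Bool, x ≠ w → y ≠ w → y ≠ z → x ≠ z := by decide
    have hside : (G.deleteEdges s).side c ≠ (G.deleteEdges s).side h2v := by
      have s1 : G.side c ≠ G.side a := (G.bipartite hac).symm
      have s2 : G.side b ≠ G.side a := (G.bipartite hG).symm
      have s3 : G.side b ≠ G.side h2v := G.bipartite hadjb2
      exact tool (G.side a) (G.side c) (G.side b) (G.side h2v) s1 s2 s3
    obtain ⟨hcd, -⟩ := hs.2 c hc' h2v hd' hside
    have hadjG : G.graph.Adj c h2v := (SimpleGraph.deleteEdges_adj.mp hcd).1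
    exact hdisj h2v (h1.2.2.1 c hcH h2v (h2.1 hh2v) hadjG) hh2v
  · have hb : b ∈ H1 := h1.2.2.1 a ha b hbS hG
    refine ⟨hb, hG, ?_⟩
    intro c hc d hd hcd
    have move : ∀ x : V, x ∈ G.edgeNbhd a b → x ∈ (G.deleteEdges s).edgeNbhd a b := by
      intro x hx
      obtain ⟨hx1, hx2⟩ := hx
      refine ⟨?_, hx2⟩
      rcases hx1 with h | h
      · exact Or.inl (hpres a x (Or.inl ha) h)
      · exact Or.inr (hpres b x (Or.inl hb) h)
    obtain ⟨hcd', hsg⟩ := hs.2 c (move c hc) d (move d hd) hcd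
    exact ⟨(SimpleGraph.deleteEdges_adj.mp hcd').1, hsg⟩

end AuxLemmas

open SignedBigraph in
/-- Lemma 4.3: if `S` minimally separates the non-trivial
components `Ĥ₁` and `Ĥ₂` of a chordal signed separable bigraph `Ĝ`, then `Ĥ₁` or
`Ĥ₂` contains an edge which is a signed simplicial edge of `Ĝ`. -/
theorem exists_signedSimplicial_in_component
    {V : Type u} [Fintype V] (G : SignedBigraph V)
    (hch : G.IsChordal)
    (hsep : IsSeparableGraph G.graph)
    (S H1 H2 : Set V)
    (hmin : MinimallySeparates G.graph S H1 H2) :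
    ∃ a b : V, ((a ∈ H1 ∧ b ∈ H1) ∨ (a ∈ H2 ∧ b ∈ H2)) ∧
      G.SignedSimplicial a b := by
  classical
  obtain ⟨l, hnodup, hiff, hord⟩ := hch
  obtain ⟨a0, ha0, b0, hb0, hadj0⟩ := hmin.1.2.2.2
  have hmem : s(a0, b0) ∈ l := (hiff _).1 (G.graph.mem_edgeSet.mpr hadj0)
  obtain ⟨n, hn⟩ := List.get_of_mem hmem
  have hex : ∃ i : ℕ, ∃ h : i < l.length, ∃ v, v ∈ l.get ⟨i, h⟩ ∧ v ∈ H1 ∪ H2 :=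
    ⟨n.1, n.2, a0, by rw [hn]; exact Sym2.mem_mk_left a0 b0, Or.inl ha0⟩
  obtain ⟨hlt, v, hv, hvH⟩ := Nat.find_spec hex
  obtain ⟨a, b, hget, hsimp⟩ := hord (Nat.find hex) hlt
  have hnt : ∀ e ∈ ({e | e ∈ l.take (Nat.find hex)} : Set (Sym2 V)),
      ∀ w, w ∈ e → w ∉ H1 ∪ H2 := by
    intro e he w hw hwH
    obtain ⟨j, hjm, hje⟩ := List.mem_take_iff_getElem.mp he
    have hj2 : j < l.length := lt_of_lt_of_le hjm (min_le_right _ _)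
    have hji : j < Nat.find hex := lt_of_lt_of_le hjm (min_le_left _ _)
    exact Nat.find_min hex hji ⟨hj2, w, by rw [List.get_eq_getElem, hje]; exact hw, hwH⟩
  have hntswap : ∀ e ∈ ({e | e ∈ l.take (Nat.find hex)} : Set (Sym2 V)),
      ∀ w, w ∈ e → w ∉ H2 ∪ H1 := by
    intro e he w hw hwH
    exact hnt e he w hw (hwH.elim Or.inr Or.inl)
  have hedge : G.Adj a b := by
    have : s(a, b) ∈ l := hget ▸ List.get_mem l _
    exact G.graph.mem_edgeSet.mp ((hiff _).2 this)
  rw [hget, Sym2.mem_iff] at hv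
  rcases hv with rfl | rfl
  · rcases hvH with hvH | hvH
    · obtain ⟨hb, hss⟩ := core_lemma G _ S H1 H2 hmin hnt v b hvH hedge hsimp
      exact ⟨v, b, Or.inl ⟨hvH, hb⟩, hss⟩
    · obtain ⟨hb, hss⟩ := core_lemma G _ S H2 H1 (ms_symm hmin) hntswap v b hvH hedge hsimp
      exact ⟨v, b, Or.inr ⟨hvH, hb⟩, hss⟩
  · rcases hvH with hvH | hvH
    · obtain ⟨hb, hss⟩ := core_lemma G _ S H1 H2 hmin hnt v a hvH
        (G.graph.adj_symm hedge) (ss_symm hsimp)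
      exact ⟨v, a, Or.inl ⟨hvH, hb⟩, hss⟩
    · obtain ⟨hb, hss⟩ := core_lemma G _ S H2 H1 (ms_symm hmin) hntswap v a hvH
        (G.graph.adj_symm hedge) (ss_symm hsimp)
      exact ⟨v, a, Or.inr ⟨hvH, hb⟩, hss⟩
end

section
/- Let Ĝ be a signed separable bigraph containing no induced signed cycle of length at least 6, and suppose a vertex set S minimally separates non-trivial components Ĥ_1 and Ĥ_2 of Ĝ − S. Let Ĝ_1 and Ĝ_2 be the subgraphs of Ĝ induced by V(Ĥ_1) ∪ S and V(Ĥ_2) ∪ S respectively. If Ĝ_1 or Ĝ_2 contains a member of W_5 ∪ W_6 as an induced subgraph whose distinguished vertices x and x' are exactly its vertices lying in S, then Ĝ contains a graph in F_5 ∪ D as an induced subgraph. -/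
universe u

/-! ## Auxiliary machinery for the proof -/

section AuxCorollary

variable {V : Type u}

lemma pairwise5_elim {α : Type u} {a b c d e : α} (h : [a,b,c,d,e].Pairwise (· ≠ ·)) :
    a ≠ b ∧ a ≠ c ∧ a ≠ d ∧ a ≠ e ∧ b ≠ c ∧ b ≠ d ∧ b ≠ e ∧ c ≠ d ∧ c ≠ e ∧ d ≠ e := by
  simp at h
  tauto

lemma pairwise6_intro {α : Type u} {a b c d e f : α}
    (h1 : a ≠ b) (h2 : a ≠ c) (h3 : a ≠ d) (h4 : a ≠ e) (h5 : a ≠ f)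
    (h6 : b ≠ c) (h7 : b ≠ d) (h8 : b ≠ e) (h9 : b ≠ f)
    (h10 : c ≠ d) (h11 : c ≠ e) (h12 : c ≠ f)
    (h13 : d ≠ e) (h14 : d ≠ f) (h15 : e ≠ f) :
    [a,b,c,d,e,f].Pairwise (· ≠ ·) := by
  simp
  tauto

/-- Walk data: a walk of length `ℓ` from `x` to `y` all of whose interior vertices
lie in `P`. -/
def AuxWalk (G : SimpleGraph V) (P : Set V) (x y : V) (ℓ : ℕ) (q : ℕ → V) : Prop :=
  q 0 = x ∧ q ℓ = y ∧ (∀ i, 0 < i → i < ℓ → q i ∈ P) ∧ ∀ i, i < ℓ → G.Adj (q i) (q (i + 1))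

lemma auxWalk_splice_eq {G : SimpleGraph V} {P : Set V} {x y : V} {ℓ : ℕ} {q : ℕ → V}
    (h : AuxWalk G P x y ℓ q) {i j : ℕ} (hij : i < j) (hj : j ≤ ℓ) (heq : q i = q j) :
    ∃ ℓ2 q2, ℓ2 < ℓ ∧ AuxWalk G P x y ℓ2 q2 := by
  obtain ⟨h0, he, hP, hA⟩ := h
  refine ⟨ℓ - (j - i), fun m => if m ≤ i then q m else q (m + (j - i)), by omega,
    ?_, ?_, ?_, ?_⟩
  · simpa using h0
  · by_cases hle : ℓ - (j - i) ≤ i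
    · have h1 : ℓ - (j - i) = i := by omega
      have h2 : j = ℓ := by omega
      show (if ℓ - (j - i) ≤ i then q (ℓ - (j - i)) else q (ℓ - (j - i) + (j - i))) = y
      rw [h1, if_pos le_rfl, heq, h2]
      exact he
    · simp only [if_neg hle]
      have h1 : ℓ - (j - i) + (j - i) = ℓ := by omega
      rw [h1]; exact he
  · intro m hm0 hmℓ
    by_cases hle : m ≤ i
    · simp only [if_pos hle]
      exact hP m hm0 (by omega)
    · simp only [if_neg hle]
      exact hP _ (by omega) (by omega)
  · intro m hm
    by_cases hle2 : m + 1 ≤ i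
    · simp only [if_pos hle2, if_pos (by omega : m ≤ i)]
      exact hA m (by omega)
    · by_cases hle : m ≤ i
      · have hmi : m = i := by omega
        subst hmi
        simp only [if_pos hle, if_neg hle2]
        rw [heq]
        have h3 : m + 1 + (j - m) = j + 1 := by omega
        rw [h3]
        exact hA j (by omega)
      · simp only [if_neg hle, if_neg (by omega : ¬ m + 1 ≤ i)]
        have h3 : m + (j - i) + 1 = m + 1 + (j - i) := by omega
        rw [← h3]
        exact hA _ (by omega)

lemma auxWalk_splice_chord {G : SimpleGraph V} {P : Set V} {x y : V} {ℓ : ℕ} {q : ℕ → V}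
    (h : AuxWalk G P x y ℓ q) {i j : ℕ} (hij : i + 2 ≤ j) (hj : j ≤ ℓ)
    (hadj : G.Adj (q i) (q j)) :
    ∃ ℓ2 q2, ℓ2 < ℓ ∧ AuxWalk G P x y ℓ2 q2 := by
  obtain ⟨h0, he, hP, hA⟩ := h
  refine ⟨ℓ - (j - i - 1), fun m => if m ≤ i then q m else q (m + (j - i - 1)), by omega,
    ?_, ?_, ?_, ?_⟩
  · simpa using h0
  · simp only [if_neg (by omega : ¬ ℓ - (j - i - 1) ≤ i)]
    have h1 : ℓ - (j - i - 1) + (j - i - 1) = ℓ := by omega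
    rw [h1]; exact he
  · intro m hm0 hmℓ
    by_cases hle : m ≤ i
    · simp only [if_pos hle]
      exact hP m hm0 (by omega)
    · simp only [if_neg hle]
      exact hP _ (by omega) (by omega)
  · intro m hm
    by_cases hle2 : m + 1 ≤ i
    · simp only [if_pos hle2, if_pos (by omega : m ≤ i)]
      exact hA m (by omega)
    · by_cases hle : m ≤ i
      · have hmi : m = i := by omega
        subst hmi
        simp only [if_pos hle, if_neg hle2]
        have h3 : m + 1 + (j - m - 1) = j := by omega
        rw [h3]
        exact hadj
      · simp only [if_neg hle, if_neg (by omega : ¬ m + 1 ≤ i)]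
        have h3 : m + (j - i - 1) + 1 = m + 1 + (j - i - 1) := by omega
        rw [← h3]
        exact hA _ (by omega)

lemma exists_nice_walk {G : SimpleGraph V} {P : Set V} {x y : V}
    (hne : ∃ ℓ q, AuxWalk G P x y ℓ q) :
    ∃ ℓ q, AuxWalk G P x y ℓ q ∧
      (∀ i j, i < j → j ≤ ℓ → q i ≠ q j) ∧
      (∀ i j, i + 2 ≤ j → j ≤ ℓ → ¬ G.Adj (q i) (q j)) := by
  classical
  have hPr : ∃ n, ∃ q, AuxWalk G P x y n q := hne
  obtain ⟨q, hq⟩ := Nat.find_spec hPr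
  refine ⟨Nat.find hPr, q, hq, ?_, ?_⟩
  · intro i j hij hj heq
    obtain ⟨ℓ2, q2, hlt, h2⟩ := auxWalk_splice_eq hq hij hj heq
    exact Nat.find_min hPr hlt ⟨q2, h2⟩
  · intro i j hij hj hadj
    obtain ⟨ℓ2, q2, hlt, h2⟩ := auxWalk_splice_chord hq hij hj hadj
    exact Nat.find_min hPr hlt ⟨q2, h2⟩

lemma auxWalk_even {G : SignedBigraph V} {P : Set V} {x y : V} {ℓ : ℕ} {q : ℕ → V}
    (h : AuxWalk G.graph P x y ℓ q) (hxy : G.side x = G.side y) : Even ℓ := by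
  obtain ⟨h0, he, -, hA⟩ := h
  have key : ∀ i, i ≤ ℓ → (G.side (q i) = G.side x ↔ Even i) := by
    intro i
    induction i with
    | zero => intro _; simp [h0]
    | succ n ih =>
      intro hn
      have h1 := ih (by omega)
      have h2 : G.side (q n) ≠ G.side (q (n + 1)) := G.bipartite (hA n (by omega))
      rw [Nat.even_add_one, ← h1]
      revert h2
      cases hb1 : G.side (q n) <;> cases hb2 : G.side (q (n + 1)) <;>
        cases hb3 : G.side x <;> simp [hb1, hb2, hb3]
  have := (key ℓ le_rfl).mp (by rw [he, hxy])
  exact this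

lemma long_cycle_of_chordless {G : SimpleGraph V} {v x y : V} {ℓ : ℕ} {q : ℕ → V}
    (hl : 4 ≤ ℓ)
    (hq0 : q 0 = x) (hqe : q ℓ = y)
    (hadj : ∀ i, i < ℓ → G.Adj (q i) (q (i + 1)))
    (hchord : ∀ i j, i + 2 ≤ j → j ≤ ℓ → ¬ G.Adj (q i) (q j))
    (hinj : ∀ i j, i < j → j ≤ ℓ → q i ≠ q j)
    (hvx : G.Adj v x) (hvy : G.Adj v y)
    (hvq : ∀ i, 0 < i → i < ℓ → ¬ G.Adj v (q i))
    (hvne : ∀ i, i ≤ ℓ → v ≠ q i) :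
    HasLongInducedCycle G := by
  haveI : NeZero (ℓ + 2) := ⟨by omega⟩
  haveI : Fact (1 < ℓ + 2) := ⟨by omega⟩
  have qadj : ∀ a b, a ≤ ℓ → b ≤ ℓ → (G.Adj (q a) (q b) ↔ (b = a + 1 ∨ a = b + 1)) := by
    intro a b ha hb
    constructor
    · intro h
      rcases Nat.lt_trichotomy a b with hab | hab | hab
      · by_contra hc
        push_neg at hc
        exact hchord a b (by omega) hb h
      · exact absurd h (by rw [hab]; exact G.loopless.irrefl (q b))
      · by_contra hc
        push_neg at hc
        exact hchord b a (by omega) ha h.symm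
    · rintro (rfl | rfl)
      · exact hadj a (by omega)
      · exact (hadj b (by omega)).symm
  have succh : ∀ i j : ZMod (ℓ + 2), j = i + 1 ↔
      (j.val = i.val + 1 ∨ (i.val = ℓ + 1 ∧ j.val = 0)) := by
    intro i j
    have hi := ZMod.val_lt i
    have hj := ZMod.val_lt j
    constructor
    · rintro rfl
      rw [ZMod.val_add, ZMod.val_one]
      rcases Nat.lt_or_ge (i.val + 1) (ℓ + 2) with h | h
      · left; exact Nat.mod_eq_of_lt h
      · right
        have h1 : i.val = ℓ + 1 := by omega
        rw [h1]
        have h2 : ℓ + 1 + 1 = ℓ + 2 := rfl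
        rw [h2, Nat.mod_self]
        exact ⟨rfl, rfl⟩
    · intro h
      apply ZMod.val_injective
      rw [ZMod.val_add, ZMod.val_one]
      rcases h with h | ⟨h1, h2⟩
      · rw [h, Nat.mod_eq_of_lt (by omega)]
      · rw [h2, h1]
        have h3 : ℓ + 1 + 1 = ℓ + 2 := rfl
        rw [h3, Nat.mod_self]
  refine ⟨ℓ + 2, by omega, fun i => if i.val = 0 then v else q (i.val - 1), ?_, ?_⟩
  · intro i j hij
    simp only at hij
    have hi := ZMod.val_lt i
    have hj := ZMod.val_lt j
    split_ifs at hij with h1 h2 h2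
    · exact ZMod.val_injective _ (h1.trans h2.symm)
    · exact absurd hij (hvne _ (by omega))
    · exact absurd hij.symm (hvne _ (by omega))
    · apply ZMod.val_injective
      rcases Nat.lt_trichotomy i.val j.val with h | h | h
      · exact absurd hij (hinj _ _ (by omega) (by omega))
      · exact h
      · exact absurd hij.symm (hinj _ _ (by omega) (by omega))
  · intro i j
    have hi := ZMod.val_lt i
    have hj := ZMod.val_lt j
    rw [succh i j, succh j i]
    by_cases h1 : i.val = 0 <;> by_cases h2 : j.val = 0
    · simp only [h1, h2, if_pos rfl]
      constructor
      · intro h; exact absurd h (G.loopless.irrefl v)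
      · intro h; exfalso; omega
    · simp only [h1, if_pos rfl, if_neg h2]
      constructor
      · intro h
        by_cases hb1 : j.val = 1
        · left; left; omega
        · by_cases hb2 : j.val = ℓ + 1
          · right; right; exact ⟨hb2, trivial⟩
          · exact absurd h (hvq (j.val - 1) (by omega) (by omega))
      · intro h
        have hb : j.val = 1 ∨ j.val = ℓ + 1 := by
          rcases h with (h | ⟨ha, hb⟩) | (h | ⟨ha, hb⟩) <;> omega
        rcases hb with hb | hb
        · rw [hb]
          have h5 : (1 : ℕ) - 1 = 0 := rfl
          rw [h5, hq0]
          exact hvx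
        · rw [hb]
          have h5 : ℓ + 1 - 1 = ℓ := rfl
          rw [h5, hqe]
          exact hvy
    · simp only [h2, if_pos rfl, if_neg h1]
      constructor
      · intro h
        by_cases hb1 : i.val = 1
        · right; left; omega
        · by_cases hb2 : i.val = ℓ + 1
          · left; right; exact ⟨hb2, trivial⟩
          · exact absurd h.symm (hvq (i.val - 1) (by omega) (by omega))
      · intro h
        have hb : i.val = 1 ∨ i.val = ℓ + 1 := by
          rcases h with (h | ⟨ha, hb⟩) | (h | ⟨ha, hb⟩) <;> omega
        rcases hb with hb | hb
        · rw [hb]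
          have h5 : (1 : ℕ) - 1 = 0 := rfl
          rw [h5, hq0]
          exact hvx.symm
        · rw [hb]
          have h5 : ℓ + 1 - 1 = ℓ := rfl
          rw [h5, hqe]
          exact hvy.symm
    · simp only [if_neg h1, if_neg h2]
      rw [qadj _ _ (by omega) (by omega)]
      omega

lemma ntc_subset {G : SimpleGraph V} {S H H2 : Set V}
    (h : IsNontrivialComponentOf G S H) (h2 : IsNontrivialComponentOf G S H2)
    {w : V} (hw : w ∈ H) (hw2 : w ∈ H2) : H ⊆ H2 := by
  have key : ∀ (a b : ↥H) (p : (G.induce H).Walk a b), (a : V) ∈ H2 → (b : V) ∈ H2 := by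
    intro a b p
    induction p with
    | nil => exact id
    | @cons c d e hadj p ih =>
      intro hc
      apply ih
      exact h2.2.2.1 _ hc _ (h.1 d.2) hadj
  intro c hc
  obtain ⟨p⟩ := h.2.1.preconnected ⟨w, hw⟩ ⟨c, hc⟩
  exact key _ _ p hw2

lemma minSep_disj {G : SimpleGraph V} {S H H2 : Set V}
    (hmin : MinimallySeparates G S H H2) : ∀ w, w ∈ H → w ∈ H2 → False := by
  intro w hw hw2
  exact hmin.2.2.1 (Set.Subset.antisymm (ntc_subset hmin.1 hmin.2.1 hw hw2)
    (ntc_subset hmin.2.1 hmin.1 hw2 hw))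

lemma minSep_no_cross {G : SimpleGraph V} {S H H2 : Set V}
    (hmin : MinimallySeparates G S H H2) : ∀ a ∈ H, ∀ b ∈ H2, ¬ G.Adj a b := by
  intro a ha b hb hab
  exact minSep_disj hmin b (hmin.1.2.2.1 a ha b (hmin.2.1.1 hb) hab) hb

lemma minSep_symm {G : SimpleGraph V} {S H H2 : Set V}
    (hmin : MinimallySeparates G S H H2) : MinimallySeparates G S H2 H :=
  ⟨hmin.2.1, hmin.1, hmin.2.2.1.symm,
    fun s hs => ⟨(hmin.2.2.2 s hs).2, (hmin.2.2.2 s hs).1⟩⟩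

lemma common_neighbor (G : SignedBigraph V) (hC : ¬ G.HasLongCycle)
    {S H H2 : Set V} (hmin : MinimallySeparates G.graph S H H2)
    {x y v : V} (hx : x ∈ S) (hy : y ∈ S) (hv : v ∈ H)
    (hvx : G.graph.Adj v x) (hvy : G.graph.Adj v y)
    (hxy : ¬ G.graph.Adj x y) (hnexy : x ≠ y) :
    ∃ a ∈ H2, G.graph.Adj x a ∧ G.graph.Adj y a := by
  obtain ⟨a, ha, hxa⟩ := (hmin.2.2.2 x hx).2
  obtain ⟨b, hb, hyb⟩ := (hmin.2.2.2 y hy).2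
  obtain ⟨w⟩ := hmin.2.1.2.1.preconnected ⟨a, ha⟩ ⟨b, hb⟩
  have hex : ∃ ℓ q, AuxWalk G.graph H2 x y ℓ q := by
    refine ⟨w.length + 2, fun i => if i = 0 then x else if w.length + 2 ≤ i then y
      else (w.getVert (i - 1) : V), ?_, ?_, ?_, ?_⟩
    · simp
    · simp only [if_neg (by omega : ¬ w.length + 2 = 0),
        if_pos (le_refl (w.length + 2))]
    · intro i h0 hiℓ
      simp only [if_neg (by omega : ¬ i = 0), if_neg (by omega : ¬ w.length + 2 ≤ i)]
      exact (w.getVert (i - 1)).2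
    · intro i hiℓ
      rcases Nat.eq_zero_or_pos i with rfl | hpos
      · simp only [if_pos rfl, if_neg (by omega : ¬ (0 : ℕ) + 1 = 0),
          if_neg (by omega : ¬ w.length + 2 ≤ 0 + 1)]
        have h1 : (0 : ℕ) + 1 - 1 = 0 := rfl
        rw [h1, w.getVert_zero]
        exact hxa
      · by_cases hlast : i = w.length + 1
        · subst hlast
          simp only [if_neg (by omega : ¬ w.length + 1 = 0),
            if_neg (by omega : ¬ w.length + 2 ≤ w.length + 1),
            if_neg (by omega : ¬ w.length + 1 + 1 = 0),
            if_pos (by omega : w.length + 2 ≤ w.length + 1 + 1)]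
          have h1 : w.length + 1 - 1 = w.length := rfl
          rw [h1, w.getVert_length]
          exact hyb.symm
        · simp only [if_neg (by omega : ¬ i = 0), if_neg (by omega : ¬ w.length + 2 ≤ i),
            if_neg (by omega : ¬ i + 1 = 0), if_neg (by omega : ¬ w.length + 2 ≤ i + 1)]
          have h1 : i - 1 + 1 = i := by omega
          have h2 : i + 1 - 1 = i := by omega
          have h3 := w.adj_getVert_succ (i := i - 1) (by omega)
          rw [h1] at h3
          rw [h2]
          exact h3
  obtain ⟨ℓ, q, hq, hinj, hchord⟩ := exists_nice_walk hex
  obtain ⟨hq0, hqe, hP, hA⟩ := hq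
  have hside : G.side x = G.side y := by
    have h1 := G.bipartite hvx
    have h2 := G.bipartite hvy
    revert h1 h2
    cases G.side v <;> cases G.side x <;> cases G.side y <;> simp
  have heven : Even ℓ := auxWalk_even ⟨hq0, hqe, hP, hA⟩ hside
  have hl2 : 2 ≤ ℓ := by
    by_contra hcon
    push_neg at hcon
    interval_cases ℓ
    · exact hnexy (hq0.symm.trans hqe)
    · exact hxy (by rw [← hq0, ← hqe]; exact hA 0 (by omega))
  rcases eq_or_lt_of_le hl2 with h2 | h4
  · refine ⟨q 1, hP 1 (by omega) (by omega), ?_, ?_⟩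
    · rw [← hq0]; exact hA 0 (by omega)
    · have h5 := hA 1 (by omega)
      have h6 : (1 : ℕ) + 1 = 2 := rfl
      rw [h6, h2, hqe] at h5
      exact h5.symm
  · exfalso
    apply hC
    have hl4 : 4 ≤ ℓ := by
      rcases heven with ⟨k, hk⟩; omega
    refine long_cycle_of_chordless hl4 hq0 hqe hA hchord hinj hvx hvy
      (fun i h0 hiℓ => minSep_no_cross hmin v hv (q i) (hP i h0 hiℓ)) ?_
    intro i hi heq
    rcases Nat.eq_zero_or_pos i with rfl | h0
    · rw [hq0] at heq
      exact hmin.1.1 hv (heq ▸ hx)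
    · rcases eq_or_lt_of_le hi with h | hlt
      · rw [h, hqe] at heq
        exact hmin.1.1 hv (heq ▸ hy)
      · exact minSep_disj hmin v hv (heq ▸ hP i h0 hlt)

lemma hasF5_of_W5 (G : SignedBigraph V) (hC : ¬ G.HasLongCycle)
    {S H H2 : Set V} (hmin : MinimallySeparates G.graph S H H2)
    (hw : G.HasW5In (H ∪ S) S) : G.HasF5 := by
  obtain ⟨u, y, v, z, x, hu, hy, hv, hz, hx, hpw, huy, huz, hvy, hvz, hxv, hxu,
    huv, hyz, hxy, hxz, hsvy, hsxu, hxS, hyS, huS, hvS, hzS⟩ := hw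
  obtain ⟨huy0, huv0, huz0, hux0, hyv0, hyz0, hyx0, hvz0, hvx0, hzx0⟩ := pairwise5_elim hpw
  have hvH : v ∈ H := by rcases hv with h | h; exact h; exact absurd h hvS
  have huH : u ∈ H := by rcases hu with h | h; exact h; exact absurd h huS
  have hzH : z ∈ H := by rcases hz with h | h; exact h; exact absurd h hzS
  have hxv2 : G.graph.Adj x v := hxv
  have hxu2 : G.graph.Adj x u := hxu
  have hvy2 : G.graph.Adj v y := hvy
  have hxy2 : ¬ G.graph.Adj x y := hxy
  obtain ⟨a, haH2, hxa, hya⟩ :=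
    common_neighbor G hC hmin hxS hyS hvH hxv2.symm hvy2 hxy2 hyx0.symm
  have haS : a ∉ S := hmin.2.1.1 haH2
  have hau : a ≠ u := fun h => minSep_disj hmin u huH (h ▸ haH2)
  have hav : a ≠ v := fun h => minSep_disj hmin v hvH (h ▸ haH2)
  have haz : a ≠ z := fun h => minSep_disj hmin z hzH (h ▸ haH2)
  have hax : a ≠ x := fun h => haS (h ▸ hxS)
  have hay : a ≠ y := fun h => haS (h ▸ hyS)
  refine ⟨a, u, v, x, y, z, ?_, hxa.symm, hya.symm,
    (fun h => minSep_no_cross hmin z hzH a haH2 (SimpleGraph.Adj.symm h)),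
    hxu2.symm, huy, huz, hxv2.symm, hvy, hvz,
    (fun h => minSep_no_cross hmin u huH a haH2 (SimpleGraph.Adj.symm h)),
    (fun h => minSep_no_cross hmin v hvH a haH2 (SimpleGraph.Adj.symm h)),
    huv, hxy, hxz, hyz, ?_, hsvy⟩
  · exact pairwise6_intro hau hav hax hay haz huv0 hux0 huy0 huz0
      hvx0 hyv0.symm hvz0 hyx0.symm hzx0.symm hyz0
  · exact (G.sign_symm u x).trans hsxu

lemma hasD_of_W6 (G : SignedBigraph V) (hC : ¬ G.HasLongCycle)
    {S H H2 : Set V} (hmin : MinimallySeparates G.graph S H H2)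
    (hw : G.HasW6In (H ∪ S) S) : G.HasD := by
  obtain ⟨u, y, v, z, x, hu, hy, hv, hz, hx, hpw, huy, huz, hvy, hvz, hxv,
    huv, hyz, hxu, hxy, hxz, hsvy, hxS, hyS, huS, hvS, hzS⟩ := hw
  obtain ⟨huy0, huv0, huz0, hux0, hyv0, hyz0, hyx0, hvz0, hvx0, hzx0⟩ := pairwise5_elim hpw
  have hvH : v ∈ H := by rcases hv with h | h; exact h; exact absurd h hvS
  have huH : u ∈ H := by rcases hu with h | h; exact h; exact absurd h huS
  have hzH : z ∈ H := by rcases hz with h | h; exact h; exact absurd h hzS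
  have hxv2 : G.graph.Adj x v := hxv
  have hvy2 : G.graph.Adj v y := hvy
  have hvz2 : G.graph.Adj v z := hvz
  have huy2 : G.graph.Adj u y := huy
  have hxy2 : ¬ G.graph.Adj x y := hxy
  obtain ⟨a, haH2, hxa, hya⟩ :=
    common_neighbor G hC hmin hxS hyS hvH hxv2.symm hvy2 hxy2 hyx0.symm
  have haS : a ∉ S := hmin.2.1.1 haH2
  have hau : a ≠ u := fun h => minSep_disj hmin u huH (h ▸ haH2)
  have hav : a ≠ v := fun h => minSep_disj hmin v hvH (h ▸ haH2)
  have haz : a ≠ z := fun h => minSep_disj hmin z hzH (h ▸ haH2)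
  have hax : a ≠ x := fun h => haS (h ▸ hxS)
  have hay : a ≠ y := fun h => haS (h ▸ hyS)
  refine ⟨u, v, a, z, y, x, ?_, huz, hvz2.symm, hxv2.symm, hxa, hya.symm, huy2.symm,
    hvy, hsvy,
    (fun h => hxu (SimpleGraph.Adj.symm h)),
    (fun h => minSep_no_cross hmin z hzH a haH2 (SimpleGraph.Adj.symm h)),
    huv,
    (fun h => minSep_no_cross hmin u huH a haH2 h),
    (fun h => minSep_no_cross hmin v hvH a haH2 h),
    (fun h => hyz (SimpleGraph.Adj.symm h)),
    (fun h => hxz (SimpleGraph.Adj.symm h)),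
    (fun h => hxy (SimpleGraph.Adj.symm h))⟩
  exact pairwise6_intro huv0 hau.symm huz0 huy0 hux0 hav.symm hvz0 hyv0.symm hvx0
    haz hay hax hyz0.symm hzx0 hyx0

end AuxCorollary


open SignedBigraph in
/-- Corollary 4.5: let `S` minimally separate the non-trivial
components `Ĥ₁`, `Ĥ₂` of a signed separable bigraph with no induced signed cycle of
length ≥ 6; if the subgraph induced by `Ĥ₁ ∪ S` or `Ĥ₂ ∪ S` contains a member of
`W₅ ∪ W₆` whose distinguished vertices are exactly its vertices in `S`, then `Ĝ`
contains a member of `F₅ ∪ D` as an induced subgraph. -/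
theorem hasF5orD_of_W5W6
    {V : Type u} (G : SignedBigraph V)
    (hsep : IsSeparableGraph G.graph)
    (hC : ¬ G.HasLongCycle)
    (S H1 H2 : Set V)
    (hmin : MinimallySeparates G.graph S H1 H2)
    (hw : G.HasW5In (H1 ∪ S) S ∨ G.HasW6In (H1 ∪ S) S ∨
          G.HasW5In (H2 ∪ S) S ∨ G.HasW6In (H2 ∪ S) S) :
    G.HasF5 ∨ G.HasD := by
  rcases hw with h | h | h | h
  · exact Or.inl (hasF5_of_W5 G hC hmin h)
  · exact Or.inr (hasD_of_W6 G hC hmin h)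
  · exact Or.inl (hasF5_of_W5 G hC (minSep_symm hmin) h)
  · exact Or.inr (hasD_of_W6 G hC (minSep_symm hmin) h)
end
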